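/- arXiv:1610.07961 — 3 statements merged into one kernel-verified Lean document; each statement's English description precedes it below -/
import Mathlib

section
/- Fix $\beta>0$. There exists $\mu=\mu(\beta,n)>0$ such that the following holds: if $w\in L^2_{loc}(\mathbb{R}^{n+1})$ satisfies $\|w-\mathrm{Pr}(w,R)\|_{\tilde L^2(B_R)}\leq\mu\|w\|_{\tilde L^2(B_R)}$ for all $R\geq 1$, then $\|w\|_{\tilde L^2(B_R)}\leq R^{1+\beta}\|w\|_{\tilde L^2(B_1)}$ for all $R\geq 2$. -/
open MeasureTheory Metric

/-- The normalized (average) `L²` norm `‖u‖_{L̃²(B_r)}` on the ball `B_r ⊂ ℝ^{n+1}`. -/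
noncomputable def tL2 (n : ℕ) (u : EuclideanSpace ℝ (Fin (n+1)) → ℝ) (r : ℝ) : ℝ :=
  Real.sqrt ((volume (ball (0 : EuclideanSpace ℝ (Fin (n+1))) r)).toReal⁻¹
    * ∫ x in ball (0 : EuclideanSpace ℝ (Fin (n+1))) r, (u x) ^ 2)

/-- `a x_{n+1}` is the `L²(B_r)`-projection of `u` onto `𝒫 = {b x_{n+1} : b ∈ ℝ}`. -/
def IsProj (n : ℕ) (u : EuclideanSpace ℝ (Fin (n+1)) → ℝ) (r : ℝ) (a : ℝ) : Prop :=
  ∀ b : ℝ,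
    (∫ x in ball (0 : EuclideanSpace ℝ (Fin (n+1))) r, (u x - a * x (Fin.last n)) ^ 2)
      ≤ ∫ x in ball (0 : EuclideanSpace ℝ (Fin (n+1))) r, (u x - b * x (Fin.last n)) ^ 2

section Aux

open Pointwise ENNReal

variable {n : ℕ}

local notation "E" => EuclideanSpace ℝ (Fin (n+1))

/-- Minkowski inequality in the form `√∫(u+v)² ≤ √∫u² + √∫v²`. -/
lemma sqrt_int_add_le {α : Type*} [MeasurableSpace α] {μ : Measure α} {u v : α → ℝ}
    (hu : MemLp u 2 μ) (hv : MemLp v 2 μ) :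
    Real.sqrt (∫ x, (u x + v x) ^ 2 ∂μ) ≤
      Real.sqrt (∫ x, (u x) ^ 2 ∂μ) + Real.sqrt (∫ x, (v x) ^ 2 ∂μ) := by
  have key : ∀ {f : α → ℝ}, MemLp f 2 μ →
      eLpNorm f 2 μ = ENNReal.ofReal (Real.sqrt (∫ x, (f x) ^ 2 ∂μ)) := by
    intro f hf
    rw [hf.eLpNorm_eq_integral_rpow_norm (by norm_num) (by norm_num)]
    have h2 : (2:ℝ≥0∞).toReal = 2 := by norm_num
    rw [h2]
    congr 1
    have hint : (∫ x, ‖f x‖ ^ (2:ℝ) ∂μ) = ∫ x, (f x) ^ 2 ∂μ := by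
      apply integral_congr_ae; filter_upwards with x
      rw [show (2:ℝ) = ((2:ℕ):ℝ) by norm_num, Real.rpow_natCast, Real.norm_eq_abs, sq_abs]
    rw [hint, Real.sqrt_eq_rpow]
    norm_num
  have huv : MemLp (fun x => u x + v x) 2 μ := hu.add hv
  have h := eLpNorm_add_le hu.1 hv.1 (by norm_num : (1:ℝ≥0∞) ≤ 2)
  have heq : eLpNorm (u + v) 2 μ = eLpNorm (fun x => u x + v x) 2 μ := rfl
  rw [heq, key huv, key hu, key hv,
    ← ENNReal.ofReal_add (Real.sqrt_nonneg _) (Real.sqrt_nonneg _)] at h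
  exact (ENNReal.ofReal_le_ofReal_iff (by positivity)).1 h

lemma vol_ball_eq (r : ℝ) (hr : 0 ≤ r) :
    (volume (ball (0:E) r)).toReal
      = r ^ (n+1) * (volume (ball (0:E) 1)).toReal := by
  rw [Measure.addHaar_ball volume (0:E) hr, finrank_euclideanSpace_fin]
  rw [ENNReal.toReal_mul, ENNReal.toReal_ofReal (by positivity)]

lemma lin_scale (c r : ℝ) (hr : 0 < r) :
    (∫ x in ball (0:E) r, (c * x (Fin.last n)) ^ 2)
      = r ^ (n+3) * ∫ x in ball (0:E) 1, (c * x (Fin.last n)) ^ 2 := by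
  have h := MeasureTheory.Measure.setIntegral_comp_smul_of_pos volume
    (fun x : E => (c * x (Fin.last n)) ^ 2) (ball (0:E) 1) hr
  have hball : r • ball (0:E) 1 = ball (0:E) r := by
    rw [_root_.smul_ball hr.ne' (0:E) 1, smul_zero, Real.norm_eq_abs, abs_of_pos hr, mul_one]
  rw [hball, finrank_euclideanSpace_fin] at h
  have hL : (∫ x in ball (0:E) 1, (fun x : E => (c * x (Fin.last n)) ^ 2) (r • x))
      = r ^ 2 * ∫ x in ball (0:E) 1, (c * x (Fin.last n)) ^ 2 := by
    rw [← integral_const_mul]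
    apply setIntegral_congr_fun measurableSet_ball
    intro x _
    simp only [PiLp.smul_apply, smul_eq_mul]
    ring
  rw [hL, smul_eq_mul] at h
  have hpow : (0:ℝ) < r ^ (n+1) := by positivity
  field_simp at h
  simp only [mul_pow] at h ⊢; rw [← h]; ring

lemma tL2_nonneg (u : E → ℝ) (r : ℝ) : 0 ≤ tL2 n u r := by
  unfold tL2; exact Real.sqrt_nonneg _

lemma memℒp_lin (c r : ℝ) :
    MemLp (fun x : E => c * x (Fin.last n)) 2 (volume.restrict (ball (0:E) r)) := by
  have hcont : Continuous (fun x : E => c * x (Fin.last n)) :=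
    continuous_const.mul (EuclideanSpace.proj (Fin.last n)).continuous
  have hfin : IsFiniteMeasure (volume.restrict (ball (0:E) r)) := by
    constructor
    rw [Measure.restrict_apply_univ]
    exact measure_ball_lt_top
  have hcoord : ∀ x : E, |x (Fin.last n)| ≤ ‖x‖ := by
    intro x
    rw [EuclideanSpace.norm_eq, ← Real.sqrt_sq_eq_abs]
    apply Real.sqrt_le_sqrt
    have h := Finset.single_le_sum (f := fun i => ‖x i‖ ^ 2)
      (fun i _ => sq_nonneg _) (Finset.mem_univ (Fin.last n))
    simpa [Real.norm_eq_abs, sq_abs] using h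
  have hbound : ∀ᵐ x ∂(volume.restrict (ball (0:E) r)),
      ‖c * x (Fin.last n)‖ ≤ |c| * |r| := by
    rw [ae_restrict_iff' measurableSet_ball]
    filter_upwards with x hx
    have hxr : ‖x‖ < r := by simpa [dist_eq_norm] using (mem_ball.1 hx)
    rw [Real.norm_eq_abs, abs_mul]
    have : |x (Fin.last n)| ≤ |r| :=
      le_trans (hcoord x) (le_trans hxr.le (le_abs_self r))
    exact mul_le_mul_of_nonneg_left this (abs_nonneg c)
  exact MemLp.mono_exponent
    (memLp_top_of_bound hcont.aestronglyMeasurable.restrict _ hbound) le_top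

lemma tL2_triangle (u v f : E → ℝ) (r : ℝ) (hf : ∀ x, f x = u x + v x)
    (hu : MemLp u 2 (volume.restrict (ball (0:E) r)))
    (hv : MemLp v 2 (volume.restrict (ball (0:E) r))) :
    tL2 n f r ≤ tL2 n u r + tL2 n v r := by
  unfold tL2
  have h0 : (0:ℝ) ≤ (volume (ball (0:E) r)).toReal⁻¹ := by positivity
  have hint : (∫ x in ball (0:E) r, f x ^ 2) = ∫ x in ball (0:E) r, (u x + v x) ^ 2 :=
    integral_congr_ae (Filter.Eventually.of_forall fun x => by simp only [hf x])
  rw [hint, Real.sqrt_mul h0, Real.sqrt_mul h0, Real.sqrt_mul h0, ← mul_add]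
  exact mul_le_mul_of_nonneg_left (sqrt_int_add_le hu hv) (Real.sqrt_nonneg _)

lemma tL2_congr_sq (u v : E → ℝ) (r : ℝ) (h : ∀ x, u x ^ 2 = v x ^ 2) :
    tL2 n u r = tL2 n v r := by
  unfold tL2
  congr 2
  exact integral_congr_ae (Filter.Eventually.of_forall fun x => h x)

lemma tL2_lin (c r : ℝ) (hr : 0 < r) :
    tL2 n (fun x : E => c * x (Fin.last n)) r
      = r * tL2 n (fun x : E => c * x (Fin.last n)) 1 := by
  unfold tL2
  rw [lin_scale c r hr, vol_ball_eq r hr.le]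
  set V1 := (volume (ball (0:E) 1)).toReal with hV1
  set J := ∫ x in ball (0:E) 1, (c * x (Fin.last n)) ^ 2 with hJ
  have hx : (r ^ (n+1) * V1)⁻¹ * (r ^ (n+3) * J) = r ^ 2 * (V1⁻¹ * J) := by
    have h1 : r ^ (n+3) = r ^ (n+1) * r ^ 2 := by ring
    rw [mul_inv, h1]
    calc (r ^ (n+1))⁻¹ * V1⁻¹ * (r ^ (n+1) * r ^ 2 * J)
        = ((r ^ (n+1))⁻¹ * r ^ (n+1)) * (r ^ 2 * (V1⁻¹ * J)) := by ring
      _ = r ^ 2 * (V1⁻¹ * J) := by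
          rw [inv_mul_cancel₀ (pow_ne_zero _ hr.ne')]; ring
  rw [hx, Real.sqrt_mul (sq_nonneg r), Real.sqrt_sq hr.le]

lemma tL2_mono (u : E → ℝ) {r r' : ℝ} (h0 : 0 < r) (hrr : r ≤ r')
    (hu : MemLp u 2 (volume.restrict (ball (0:E) r'))) :
    tL2 n u r ≤ Real.sqrt ((r'/r) ^ (n+1)) * tL2 n u r' := by
  have hr' : 0 < r' := lt_of_lt_of_le h0 hrr
  have hI : (∫ x in ball (0:E) r, u x ^ 2) ≤ ∫ x in ball (0:E) r', u x ^ 2 := by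
    apply setIntegral_mono_set hu.integrable_sq
      (Filter.Eventually.of_forall fun x => sq_nonneg _)
    exact HasSubset.Subset.eventuallyLE (ball_subset_ball hrr)
  unfold tL2
  rw [vol_ball_eq r h0.le, vol_ball_eq r' hr'.le]
  set V1 := (volume (ball (0:E) 1)).toReal with hV1
  set J := ∫ x in ball (0:E) r', u x ^ 2 with hJ
  have key : (r'/r) ^ (n+1) * ((r' ^ (n+1) * V1)⁻¹ * J) = (r ^ (n+1) * V1)⁻¹ * J := by
    rw [div_pow, mul_inv, mul_inv, div_eq_mul_inv]
    calc r' ^ (n+1) * (r ^ (n+1))⁻¹ * ((r' ^ (n+1))⁻¹ * V1⁻¹ * J)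
        = (r' ^ (n+1) * (r' ^ (n+1))⁻¹) * ((r ^ (n+1))⁻¹ * V1⁻¹ * J) := by ring
      _ = (r ^ (n+1))⁻¹ * V1⁻¹ * J := by
          rw [mul_inv_cancel₀ (pow_ne_zero _ hr'.ne')]; ring
  calc Real.sqrt ((r ^ (n+1) * V1)⁻¹ * ∫ x in ball (0:E) r, u x ^ 2)
      ≤ Real.sqrt ((r ^ (n+1) * V1)⁻¹ * J) := by
        apply Real.sqrt_le_sqrt
        exact mul_le_mul_of_nonneg_left hI (by positivity)
    _ = Real.sqrt ((r'/r) ^ (n+1) * ((r' ^ (n+1) * V1)⁻¹ * J)) := by rw [key]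
    _ = Real.sqrt ((r'/r) ^ (n+1)) * Real.sqrt ((r' ^ (n+1) * V1)⁻¹ * J) :=
        Real.sqrt_mul (by positivity) _

end Aux

/-- Lemma 2.7: given `β > 0` there exists `μ = μ(β,n) > 0` such that any
`w ∈ L²_{loc}(ℝ^{n+1})` with `‖w - Pr(w,R)‖_{L̃²(B_R)} ≤ μ ‖w‖_{L̃²(B_R)}` for all `R ≥ 1`
satisfies `‖w‖_{L̃²(B_R)} ≤ R^{1+β} ‖w‖_{L̃²(B₁)}` for all `R ≥ 2`. -/
theorem growth_from_projection_control (n : ℕ) (β : ℝ) (hβ : 0 < β) :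
    ∃ μ : ℝ, 0 < μ ∧
      ∀ (w : EuclideanSpace ℝ (Fin (n+1)) → ℝ) (a : ℝ → ℝ),
        (∀ R : ℝ, 1 ≤ R →
          MemLp w 2 (volume.restrict (ball (0 : EuclideanSpace ℝ (Fin (n+1))) R))) →
        (∀ R : ℝ, 1 ≤ R → IsProj n w R (a R)) →
        (∀ R : ℝ, 1 ≤ R →
          tL2 n (fun x => w x - a R * x (Fin.last n)) R ≤ μ * tL2 n w R) →
        ∀ R : ℝ, 2 ≤ R → tL2 n w R ≤ R ^ ((1:ℝ) + β) * tL2 n w 1 := by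
  set β' := β / 2 with hβ'def
  have hβ' : 0 < β' := by positivity
  set c : ℝ := Real.sqrt (2 ^ (n+1)) with hcdef
  have hc : 0 < c := Real.sqrt_pos.2 (by positivity)
  set K : ℝ := 1 + 2 * c with hKdef
  have hK : 0 < K := by positivity
  have he : (0:ℝ) < 1 - (2:ℝ) ^ (-β') := by
    have h1 : (2:ℝ) ^ (-β') < 2 ^ (0:ℝ) :=
      Real.rpow_lt_rpow_of_exponent_lt one_lt_two (by linarith)
    have h2 : (2:ℝ) ^ (0:ℝ) = 1 := Real.rpow_zero 2
    linarith
  refine ⟨(1 - (2:ℝ) ^ (-β')) / K, by positivity, ?_⟩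
  intro w a hMem hProj hctrl R hR
  set μ0 := (1 - (2:ℝ) ^ (-β')) / K with hμ0def
  have hμ0 : 0 < μ0 := by positivity
  have hKμ : K * μ0 = 1 - (2:ℝ) ^ (-β') := by
    rw [hμ0def]; field_simp
  -- the one-step growth estimate
  have step : ∀ r s : ℝ, 1 ≤ r → 1 ≤ s → s ≤ 2 →
      tL2 n w (s * r) ≤ 2 ^ β' * (s * tL2 n w r) := by
    intro r s hr hs1 hs2
    have hr0 : (0:ℝ) < r := lt_of_lt_of_le one_pos hr
    have hρ : (1:ℝ) ≤ s * r := by nlinarith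
    have hρ0 : (0:ℝ) < s * r := by nlinarith
    have hrρ : r ≤ s * r := by nlinarith
    have hwρ := hMem (s * r) hρ
    have hwr := hMem r hr
    have hlinρ := memℒp_lin (n := n) (a (s * r)) (s * r)
    have hlinr := memℒp_lin (n := n) (a (s * r)) r
    have hdρ : MemLp (fun x => w x - a (s * r) * x (Fin.last n)) 2
        (volume.restrict (ball (0 : EuclideanSpace ℝ (Fin (n+1))) (s * r))) := hwρ.sub hlinρ
    have hdr : MemLp (fun x => a (s * r) * x (Fin.last n) - w x) 2
        (volume.restrict (ball (0 : EuclideanSpace ℝ (Fin (n+1))) r)) := hlinr.sub hwr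
    -- names
    set A := tL2 n (fun x => w x - a (s * r) * x (Fin.last n)) (s * r) with hAdef
    set D := tL2 n (fun x => w x - a (s * r) * x (Fin.last n)) r with hDdef
    set C := tL2 n (fun x : EuclideanSpace ℝ (Fin (n+1)) => a (s * r) * x (Fin.last n)) r
      with hCdef
    have hA0 : 0 ≤ A := tL2_nonneg _ _
    have hA : A ≤ μ0 * tL2 n w (s * r) := hctrl (s * r) hρ
    -- triangle at radius s*r
    have h1 : tL2 n w (s * r)
        ≤ A + tL2 n (fun x : EuclideanSpace ℝ (Fin (n+1)) =>
            a (s * r) * x (Fin.last n)) (s * r) :=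
      tL2_triangle _ _ _ _ (fun x => by ring) hdρ hlinρ
    -- scaling of the linear part
    have h3 : tL2 n (fun x : EuclideanSpace ℝ (Fin (n+1)) =>
        a (s * r) * x (Fin.last n)) (s * r) = s * C := by
      rw [tL2_lin _ _ hρ0, hCdef, tL2_lin _ _ hr0]
      ring
    -- triangle at radius r for the linear part
    have h4 : C ≤ D + tL2 n w r := by
      have := tL2_triangle (n := n) (fun x => a (s * r) * x (Fin.last n) - w x) w
        (fun x => a (s * r) * x (Fin.last n)) r (fun x => by ring) hdr hwr
      have hsw : tL2 n (fun x => a (s * r) * x (Fin.last n) - w x) r = D :=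
        tL2_congr_sq _ _ _ (fun x => by ring)
      rw [hsw] at this
      exact this
    -- monotonicity
    have h5 : D ≤ c * A := by
      have hm := tL2_mono (n := n) (fun x => w x - a (s * r) * x (Fin.last n))
        hr0 hrρ hdρ
      have hdiv : (s * r) / r = s := by field_simp
      rw [hdiv] at hm
      have hsq : Real.sqrt (s ^ (n+1)) ≤ c := by
        rw [hcdef]
        exact Real.sqrt_le_sqrt (pow_le_pow_left₀ (by linarith) hs2 _)
      calc D ≤ Real.sqrt (s ^ (n+1)) * A := hm
        _ ≤ c * A := mul_le_mul_of_nonneg_right hsq hA0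
    -- combine
    have hfr0 : 0 ≤ tL2 n w r := tL2_nonneg _ _
    have hcA : c * A ≤ c * (μ0 * tL2 n w (s * r)) :=
      mul_le_mul_of_nonneg_left hA hc.le
    have hcombine : tL2 n w (s * r)
        ≤ K * μ0 * tL2 n w (s * r) + s * tL2 n w r := by
      have hsC : s * C ≤ s * (c * (μ0 * tL2 n w (s * r)) + tL2 n w r) := by
        apply mul_le_mul_of_nonneg_left _ (by linarith)
        calc C ≤ D + tL2 n w r := h4
          _ ≤ c * (μ0 * tL2 n w (s * r)) + tL2 n w r := by linarith
      have hsplit : s * (c * (μ0 * tL2 n w (s * r)) + tL2 n w r)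
          ≤ 2 * (c * (μ0 * tL2 n w (s * r))) + s * tL2 n w r := by
        have h6 : 0 ≤ c * (μ0 * tL2 n w (s * r)) := by
          have := tL2_nonneg (n := n) w (s * r); positivity
        nlinarith
      have := h1
      rw [h3] at this
      have hKexp : K * μ0 * tL2 n w (s * r)
          = μ0 * tL2 n w (s * r) + 2 * (c * (μ0 * tL2 n w (s * r))) := by
        rw [hKdef]; ring
      rw [hKexp]
      linarith
    rw [hKμ] at hcombine
    have hfle : (2:ℝ) ^ (-β') * tL2 n w (s * r) ≤ s * tL2 n w r := by linarith
    have hpow : (2:ℝ) ^ β' * (2:ℝ) ^ (-β') = 1 := by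
      rw [← Real.rpow_add two_pos]; simp
    calc tL2 n w (s * r) = ((2:ℝ) ^ β' * (2:ℝ) ^ (-β')) * tL2 n w (s * r) := by
          rw [hpow]; ring
      _ = (2:ℝ) ^ β' * ((2:ℝ) ^ (-β') * tL2 n w (s * r)) := by ring
      _ ≤ (2:ℝ) ^ β' * (s * tL2 n w r) :=
          mul_le_mul_of_nonneg_left hfle (Real.rpow_nonneg (by norm_num) _)
  -- iterate the step estimate
  have claim : ∀ k : ℕ, ∀ s : ℝ, 1 ≤ s → s ≤ 2 →
      tL2 n w (s * 2 ^ k) ≤ 2 ^ (β' * ((k:ℝ) + 1)) * 2 ^ k * s * tL2 n w 1 := by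
    intro k
    induction k with
    | zero =>
      intro s hs1 hs2
      have h := step 1 s le_rfl hs1 hs2
      norm_num at h ⊢
      calc tL2 n w s ≤ 2 ^ β' * (s * tL2 n w 1) := h
        _ = 2 ^ β' * s * tL2 n w 1 := by ring
    | succ k ih =>
      intro s hs1 hs2
      have hpk : (1:ℝ) ≤ 2 ^ k := one_le_pow₀ (by norm_num)
      have h1 : (1:ℝ) ≤ s * 2 ^ k := by nlinarith
      have h := step (s * 2 ^ k) 2 h1 one_le_two le_rfl
      have heq : (2:ℝ) * (s * 2 ^ k) = s * 2 ^ (k+1) := by ring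
      rw [heq] at h
      have hf1 : 0 ≤ tL2 n w 1 := tL2_nonneg _ _
      have hih := ih s hs1 hs2
      calc tL2 n w (s * 2 ^ (k+1)) ≤ 2 ^ β' * (2 * tL2 n w (s * 2 ^ k)) := h
        _ ≤ 2 ^ β' * (2 * (2 ^ (β' * ((k:ℝ) + 1)) * 2 ^ k * s * tL2 n w 1)) := by
            apply mul_le_mul_of_nonneg_left _ (Real.rpow_nonneg (by norm_num) _)
            linarith
        _ = 2 ^ (β' * ((((k+1:ℕ)):ℝ) + 1)) * 2 ^ (k+1) * s * tL2 n w 1 := by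
            rw [show β' * ((((k+1:ℕ)):ℝ) + 1) = β' + β' * ((k:ℝ) + 1) by push_cast; ring,
              Real.rpow_add two_pos]
            ring
  -- conclude
  have hR0 : (0:ℝ) < R := lt_of_lt_of_le two_pos hR
  set k := ⌊Real.logb 2 R⌋₊ with hkdef
  have hlogb1 : 1 ≤ Real.logb 2 R := by
    have := Real.logb_le_logb_of_le (b := 2) one_lt_two two_pos hR
    rw [Real.logb_self_eq_one (by norm_num)] at this
    exact this
  have hk1 : 1 ≤ k := Nat.le_floor (by exact_mod_cast hlogb1)
  have hkler : ((k:ℝ)) ≤ Real.logb 2 R := Nat.floor_le (by linarith)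
  have h2k_le : (2:ℝ) ^ k ≤ R := by
    calc (2:ℝ) ^ k = 2 ^ ((k:ℝ)) := (Real.rpow_natCast 2 k).symm
      _ ≤ 2 ^ (Real.logb 2 R) := Real.rpow_le_rpow_of_exponent_le one_le_two hkler
      _ = R := Real.rpow_logb two_pos (by norm_num) hR0
  have hR_lt : R < 2 ^ (k+1) := by
    have hfl : Real.logb 2 R < (k:ℝ) + 1 := by
      have := Nat.lt_floor_add_one (Real.logb 2 R)
      push_cast at this ⊢
      linarith
    calc R = 2 ^ (Real.logb 2 R) := (Real.rpow_logb two_pos (by norm_num) hR0).symm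
      _ < 2 ^ (((k:ℝ)) + 1) := Real.rpow_lt_rpow_of_exponent_lt one_lt_two hfl
      _ = 2 ^ (k+1) := by
          rw [show ((k:ℝ)) + 1 = ((k+1:ℕ):ℝ) by push_cast; ring, Real.rpow_natCast]
  have hp0 : (0:ℝ) < 2 ^ k := by positivity
  set s := R / 2 ^ k with hsdef
  have hs1 : 1 ≤ s := (le_div_iff₀ hp0).2 (by linarith)
  have hs2 : s ≤ 2 := by
    rw [hsdef, div_le_iff₀ hp0]
    have : (2:ℝ) ^ (k+1) = 2 * 2 ^ k := by ring
    linarith [hR_lt, this ▸ hR_lt]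
  have hsR : s * 2 ^ k = R := by
    rw [hsdef]; field_simp
  have hmain := claim k s hs1 hs2
  rw [hsR] at hmain
  have hf1 : 0 ≤ tL2 n w 1 := tL2_nonneg _ _
  refine le_trans hmain (mul_le_mul_of_nonneg_right ?_ hf1)
  have hs0 : 0 ≤ s := by linarith
  have hβk : (2:ℝ) ^ (β' * ((k:ℝ) + 1)) ≤ 2 ^ ((k:ℝ) * β) := by
    apply Real.rpow_le_rpow_of_exponent_le one_le_two
    have hk1' : (1:ℝ) ≤ (k:ℝ) := by exact_mod_cast hk1
    rw [hβ'def]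
    nlinarith
  have hRβ : (2:ℝ) ^ ((k:ℝ) * β) ≤ R ^ β := by
    calc (2:ℝ) ^ ((k:ℝ) * β) = ((2:ℝ) ^ ((k:ℝ))) ^ β := Real.rpow_mul (by norm_num) _ _
      _ ≤ R ^ β := by
          apply Real.rpow_le_rpow (by positivity) _ hβ.le
          rw [Real.rpow_natCast]; exact h2k_le
  have hRpow : R ^ ((1:ℝ) + β) = R * R ^ β := by
    rw [Real.rpow_add hR0, Real.rpow_one]
  calc (2:ℝ) ^ (β' * ((k:ℝ) + 1)) * 2 ^ k * s
      ≤ R ^ β * 2 ^ k * s := by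
        have := le_trans hβk hRβ
        apply mul_le_mul_of_nonneg_right (mul_le_mul_of_nonneg_right this hp0.le) hs0
    _ = R ^ β * R := by rw [mul_assoc, mul_comm ((2:ℝ)^k) s, hsR]
    _ = R ^ ((1:ℝ) + β) := by rw [hRpow]; ring
end

section
/- Every two-dimensional solution $v(x_n,x_{n+1})$ of the mixed boundary value problem ($\Delta v=0$ in $B_1\setminus\{x_{n+1}=0\}$, $\partial_{n+1}^+v+\partial_{n+1}^-v=0$ on $\{x_{n+1}=0,x_n>0\}$, $v=0$ on $\{x_{n+1}=0,x_n\leq 0\}$) that is positively homogeneous is, up to scalar multiples, one of: $x_{n+1}$; $\mathrm{Re}(x_n+i|x_{n+1}|)^{\kappa}$ with $\kappa=(2m+1)/2$, $m\in\mathbb{N}$; or $\mathrm{Im}(x_n+ix_{n+1})^{\kappa}$ with $\kappa\in\mathbb{N}$. -/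
set_option maxHeartbeats 1000000


open Set

/-- The (pointwise) Laplacian of `f : ℝ² → ℝ`, via iterated coordinate derivatives. -/
noncomputable def lap2 (f : ℝ × ℝ → ℝ) (x : ℝ × ℝ) : ℝ :=
  deriv (fun t => deriv (fun s => f (s, x.2)) t) x.1
    + deriv (fun t => deriv (fun s => f (x.1, s)) t) x.2

/-- One-sided normal derivative from the upper half-plane at `(s,0)` (outer normal `-e₂`). -/
noncomputable def nUp (f : ℝ × ℝ → ℝ) (s : ℝ) : ℝ :=
  -(derivWithin (fun t => f (s, t)) (Ioi 0) 0)

/-- One-sided normal derivative from the lower half-plane at `(s,0)` (outer normal `e₂`). -/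
noncomputable def nDown (f : ℝ × ℝ → ℝ) (s : ℝ) : ℝ :=
  derivWithin (fun t => f (s, t)) (Iio 0) 0

/-- `Re(x_n + i|x_{n+1}|)^κ` (principal branch), i.e. `ρ^κ cos(κθ)` with `θ ∈ [0,π]`. -/
noncomputable def ReP (κ : ℝ) (x : ℝ × ℝ) : ℝ :=
  (((x.1 : ℂ) + (|x.2| : ℝ) * Complex.I) ^ (κ : ℂ)).re

lemma circle_ode (v : ℝ × ℝ → ℝ)
    (hsm : ContDiffOn ℝ 2 v {x : ℝ × ℝ | x.2 ≠ 0})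
    (hharm : ∀ x : ℝ × ℝ, x.2 ≠ 0 → lap2 v x = 0)
    (κ : ℝ) (hκ : ∀ lam : ℝ, 0 < lam → ∀ x : ℝ × ℝ, v (lam • x) = lam ^ κ * v x)
    (θ : ℝ) (hθ : Real.sin θ ≠ 0) :
    HasDerivAt (fun ψ => v (Real.cos ψ, Real.sin ψ))
      (fderiv ℝ v (Real.cos θ, Real.sin θ) (-Real.sin θ, Real.cos θ)) θ
    ∧ HasDerivAt (fun ψ => fderiv ℝ v (Real.cos ψ, Real.sin ψ) (-Real.sin ψ, Real.cos ψ))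
      (-κ^2 * v (Real.cos θ, Real.sin θ)) θ := by
  have hU : IsOpen {x : ℝ × ℝ | x.2 ≠ 0} := isOpen_ne.preimage continuous_snd
  have hv1 : DifferentiableOn ℝ v {x : ℝ × ℝ | x.2 ≠ 0} := hsm.differentiableOn two_ne_zero
  have hf'C : ContDiffOn ℝ 1 (fderiv ℝ v) {x : ℝ × ℝ | x.2 ≠ 0} :=
    hsm.fderiv_of_isOpen hU (by norm_num)
  have hvx : ∀ x : ℝ × ℝ, x.2 ≠ 0 → DifferentiableAt ℝ v x := fun x hx =>
    hv1.differentiableAt (hU.mem_nhds hx)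
  have hf'x : ∀ x : ℝ × ℝ, x.2 ≠ 0 → DifferentiableAt ℝ (fderiv ℝ v) x := fun x hx =>
    (hf'C.differentiableOn one_ne_zero).differentiableAt (hU.mem_nhds hx)
  set p : ℝ × ℝ := (Real.cos θ, Real.sin θ) with hp
  have hpU : p.2 ≠ 0 := hθ
  have he : ∀ ψ : ℝ, HasDerivAt (fun ψ => ((Real.cos ψ, Real.sin ψ) : ℝ × ℝ))
      (-Real.sin ψ, Real.cos ψ) ψ := fun ψ =>
    (Real.hasDerivAt_cos ψ).prodMk (Real.hasDerivAt_sin ψ)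
  have hd1 : HasDerivAt (fun ψ => v (Real.cos ψ, Real.sin ψ))
      (fderiv ℝ v p (-Real.sin θ, Real.cos θ)) θ :=
    ((hvx p hpU).hasFDerivAt).comp_hasDerivAt θ (he θ)
  refine ⟨hd1, ?_⟩
  set H := fderiv ℝ (fderiv ℝ v) p with hH
  have hc : HasDerivAt (fun ψ => fderiv ℝ v (Real.cos ψ, Real.sin ψ))
      (H (-Real.sin θ, Real.cos θ)) θ :=
    ((hf'x p hpU).hasFDerivAt).comp_hasDerivAt θ (he θ)
  have hu : HasDerivAt (fun ψ => ((-Real.sin ψ, Real.cos ψ) : ℝ × ℝ))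
      (-Real.cos θ, -Real.sin θ) θ :=
    ((Real.hasDerivAt_sin θ).neg).prodMk (by simpa using (Real.hasDerivAt_cos θ))
  have hd2 : HasDerivAt (fun ψ => fderiv ℝ v (Real.cos ψ, Real.sin ψ) (-Real.sin ψ, Real.cos ψ))
      (H (-Real.sin θ, Real.cos θ) (-Real.sin θ, Real.cos θ)
        + fderiv ℝ v p (-Real.cos θ, -Real.sin θ)) θ := hc.clm_apply hu
  -- radial identities
  have hmem : ∀ r : ℝ, r ≠ 0 → ((r * Real.cos θ, r * Real.sin θ) : ℝ × ℝ).2 ≠ 0 := by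
    intro r hr; exact mul_ne_zero hr hθ
  have hmder : ∀ r : ℝ, HasDerivAt (fun r : ℝ => ((r * Real.cos θ, r * Real.sin θ) : ℝ × ℝ)) p r := by
    intro r
    have := ((hasDerivAt_id r).mul_const (Real.cos θ)).prodMk
      ((hasDerivAt_id r).mul_const (Real.sin θ))
    simpa using this
  have hsmul : ∀ t : ℝ, (t • p : ℝ × ℝ) = (t * Real.cos θ, t * Real.sin θ) := by
    intro t; simp [hp, Prod.smul_def, smul_eq_mul]
  have hradial : ∀ r ∈ Ioi (0:ℝ),
      fderiv ℝ v (r * Real.cos θ, r * Real.sin θ) p = r ^ (κ - 1) * (κ * v p) := by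
    intro r hr
    have h1 : HasDerivAt (fun r : ℝ => v (r * Real.cos θ, r * Real.sin θ))
        (fderiv ℝ v (r * Real.cos θ, r * Real.sin θ) p) r :=
      ((hvx _ (hmem r (ne_of_gt hr))).hasFDerivAt).comp_hasDerivAt r (hmder r)
    have heq : (fun r : ℝ => r ^ κ * v p)
        =ᶠ[nhds r] (fun r : ℝ => v (r * Real.cos θ, r * Real.sin θ)) := by
      filter_upwards [Ioi_mem_nhds hr] with t ht
      rw [← hsmul t, hκ t ht]
    have h2 : HasDerivAt (fun r : ℝ => v (r * Real.cos θ, r * Real.sin θ))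
        (κ * r ^ (κ - 1) * v p) r := by
      have := (Real.hasDerivAt_rpow_const (x := r) (p := κ) (Or.inl (ne_of_gt hr))).mul_const (v p)
      exact this.congr_of_eventuallyEq heq.symm
    have := h1.unique h2
    rw [this]; ring
  have hap : fderiv ℝ v p p = κ * v p := by
    have := hradial 1 (by norm_num)
    simpa using this
  have hHpp : H p p = (κ - 1) * (κ * v p) := by
    have h1 : HasDerivAt (fun r : ℝ => fderiv ℝ v (r * Real.cos θ, r * Real.sin θ) p)
        (H p p) 1 := by
      have hcc : HasDerivAt (fun r : ℝ => fderiv ℝ v (r * Real.cos θ, r * Real.sin θ))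
          (fderiv ℝ (fderiv ℝ v) (1 * Real.cos θ, 1 * Real.sin θ) p) 1 :=
        ((hf'x _ (hmem 1 one_ne_zero)).hasFDerivAt).comp_hasDerivAt 1 (hmder 1)
      have := hcc.clm_apply (hasDerivAt_const 1 p)
      simpa using this
    have h2 : HasDerivAt (fun r : ℝ => r ^ (κ - 1) * (κ * v p))
        ((κ - 1) * (κ * v p)) 1 := by
      have := (Real.hasDerivAt_rpow_const (x := (1:ℝ)) (p := κ - 1)
        (Or.inl one_ne_zero)).mul_const (κ * v p)
      simpa using this
    have heq : (fun r : ℝ => fderiv ℝ v (r * Real.cos θ, r * Real.sin θ) p)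
        =ᶠ[nhds 1] (fun r : ℝ => r ^ (κ - 1) * (κ * v p)) := by
      filter_upwards [Ioi_mem_nhds (by norm_num : (0:ℝ) < 1)] with t ht
      exact hradial t ht
    exact (h1.congr_of_eventuallyEq heq.symm).unique h2
  -- laplacian in coordinates
  have hlap : H (1,0) (1,0) + H (0,1) (0,1) = 0 := by
    have h0 := hharm p hpU
    unfold lap2 at h0
    have e1 : ∀ t : ℝ, deriv (fun s => v (s, p.2)) t = fderiv ℝ v (t, p.2) (1, 0) := by
      intro t
      have hι : HasDerivAt (fun s : ℝ => ((s, p.2) : ℝ × ℝ)) (1, 0) t :=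
        (hasDerivAt_id t).prodMk (hasDerivAt_const t p.2)
      exact (((hvx (t, p.2) hpU).hasFDerivAt).comp_hasDerivAt t hι).deriv
    have d1 : deriv (fun t => deriv (fun s => v (s, p.2)) t) p.1 = H (1,0) (1,0) := by
      have hι : HasDerivAt (fun t : ℝ => ((t, p.2) : ℝ × ℝ)) (1, 0) p.1 :=
        (hasDerivAt_id p.1).prodMk (hasDerivAt_const p.1 p.2)
      have hc1 : HasDerivAt (fun t : ℝ => fderiv ℝ v (t, p.2)) (H (1,0)) p.1 := by
        have := ((hf'x p hpU).hasFDerivAt).comp_hasDerivAt p.1 (by simpa using hι)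
        simpa [Function.comp_def] using this
      have := hc1.clm_apply (hasDerivAt_const p.1 ((1:ℝ),(0:ℝ)))
      simp only [funext e1]
      simpa using this.deriv
    have e2 : (fun t : ℝ => deriv (fun s => v (p.1, s)) t)
        =ᶠ[nhds p.2] (fun t : ℝ => fderiv ℝ v (p.1, t) (0, 1)) := by
      filter_upwards [isOpen_ne.mem_nhds hpU] with t ht
      have hι : HasDerivAt (fun s : ℝ => ((p.1, s) : ℝ × ℝ)) (0, 1) t :=
        (hasDerivAt_const t p.1).prodMk (hasDerivAt_id t)
      exact (((hvx (p.1, t) ht).hasFDerivAt).comp_hasDerivAt t hι).deriv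
    have d2 : deriv (fun t => deriv (fun s => v (p.1, s)) t) p.2 = H (0,1) (0,1) := by
      rw [e2.deriv_eq]
      have hι : HasDerivAt (fun t : ℝ => ((p.1, t) : ℝ × ℝ)) (0, 1) p.2 :=
        (hasDerivAt_const p.2 p.1).prodMk (hasDerivAt_id p.2)
      have hc2 : HasDerivAt (fun t : ℝ => fderiv ℝ v (p.1, t)) (H (0,1)) p.2 := by
        have := ((hf'x p hpU).hasFDerivAt).comp_hasDerivAt p.2 (by simpa using hι)
        simpa [Function.comp_def] using this
      have := hc2.clm_apply (hasDerivAt_const p.2 ((0:ℝ),(1:ℝ)))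
      simpa using this.deriv
    rw [d1, d2] at h0
    exact h0
  -- bilinear expansion
  have expand : ∀ a b : ℝ, H (a, b) (a, b)
      = a^2 * H (1,0) (1,0) + a*b * H (1,0) (0,1) + a*b * H (0,1) (1,0)
        + b^2 * H (0,1) (0,1) := by
    intro a b
    have hab : ((a, b) : ℝ × ℝ) = a • ((1:ℝ), (0:ℝ)) + b • ((0:ℝ), (1:ℝ)) := by
      simp [Prod.smul_def, smul_eq_mul]
    rw [hab]
    simp only [map_add, map_smul, ContinuousLinearMap.add_apply,
      ContinuousLinearMap.smul_apply, smul_eq_mul]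
    ring
  -- conclude
  have hpyth : Real.sin θ ^ 2 + Real.cos θ ^ 2 = 1 := Real.sin_sq_add_cos_sq θ
  have hneg : fderiv ℝ v p (-Real.cos θ, -Real.sin θ) = -(κ * v p) := by
    have : ((-Real.cos θ, -Real.sin θ) : ℝ × ℝ) = -p := by simp [hp, Prod.ext_iff]
    rw [this, map_neg, hap]
  have key : H (-Real.sin θ, Real.cos θ) (-Real.sin θ, Real.cos θ)
      + fderiv ℝ v p (-Real.cos θ, -Real.sin θ) = -κ^2 * v p := by
    rw [hneg]
    have E1 := expand (-Real.sin θ) (Real.cos θ)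
    have E2 : H p p = (κ-1)*(κ * v p) := hHpp
    rw [expand (Real.cos θ) (Real.sin θ)] at E2
    rw [E1]
    linear_combination (-1) * E2 + (H (1,0) (1,0) + H (0,1) (0,1)) * hpyth + hlap
  rw [← key]
  exact hd2
lemma ode_closed_form (κ : ℝ) (hκ : κ ≠ 0) (h h1 : ℝ → ℝ) {a b t₀ : ℝ} (ht₀ : t₀ ∈ Ioo a b)
    (hd : ∀ θ ∈ Ioo a b, HasDerivAt h (h1 θ) θ ∧ HasDerivAt h1 (-κ^2 * h θ) θ) :
    ∃ A B : ℝ, ∀ θ ∈ Ioo a b, h θ = A * Real.cos (κ*θ) + B * Real.sin (κ*θ) := by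
  classical
  set L : ℝ × ℝ →L[ℝ] ℝ × ℝ :=
    (ContinuousLinearMap.snd ℝ ℝ ℝ).prod ((-κ^2) • (ContinuousLinearMap.fst ℝ ℝ ℝ)) with hLdef
  have hL : ∀ q : ℝ × ℝ, L q = (q.2, -κ^2 * q.1) := by
    intro q; simp [hLdef, smul_eq_mul]
  set C : ℝ := h1 t₀ / κ with hCdef
  have hC : h1 t₀ = κ * C := by rw [hCdef]; field_simp
  set A : ℝ := h t₀ * Real.cos (κ*t₀) - C * Real.sin (κ*t₀) with hAdef
  set B : ℝ := h t₀ * Real.sin (κ*t₀) + C * Real.cos (κ*t₀) with hBdef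
  refine ⟨A, B, ?_⟩
  set g : ℝ → ℝ × ℝ := fun θ =>
    (A * Real.cos (κ*θ) + B * Real.sin (κ*θ),
      κ * (-A * Real.sin (κ*θ) + B * Real.cos (κ*θ))) with hgdef
  have hlin : ∀ θ : ℝ, HasDerivAt (fun ψ : ℝ => κ * ψ) κ θ := fun θ => by
    simpa using (hasDerivAt_id θ).const_mul κ
  have hgd : ∀ θ : ℝ, HasDerivAt g (L (g θ)) θ := by
    intro θ
    have hcos : HasDerivAt (fun ψ : ℝ => Real.cos (κ*ψ)) (-Real.sin (κ*θ) * κ) θ :=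
      (Real.hasDerivAt_cos (κ*θ)).comp θ (hlin θ)
    have hsin : HasDerivAt (fun ψ : ℝ => Real.sin (κ*ψ)) (Real.cos (κ*θ) * κ) θ :=
      (Real.hasDerivAt_sin (κ*θ)).comp θ (hlin θ)
    have h1' : HasDerivAt (fun ψ => A * Real.cos (κ*ψ) + B * Real.sin (κ*ψ))
        (A * (-Real.sin (κ*θ) * κ) + B * (Real.cos (κ*θ) * κ)) θ :=
      (hcos.const_mul A).add (hsin.const_mul B)
    have h2' : HasDerivAt (fun ψ => κ * (-A * Real.sin (κ*ψ) + B * Real.cos (κ*ψ)))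
        (κ * (-A * (Real.cos (κ*θ) * κ) + B * (-Real.sin (κ*θ) * κ))) θ := by
      exact (((hsin.const_mul (-A)).add (hcos.const_mul B)).const_mul κ)
    have := h1'.prodMk h2'
    convert this using 1
    rw [hL]
    simp only [hgdef, Prod.mk.injEq]
    constructor <;> ring
  have hy : ∀ t ∈ Ioo a b, HasDerivAt (fun θ => (h θ, h1 θ)) (L ((h t, h1 t))) t
      ∧ ((h t, h1 t) : ℝ × ℝ) ∈ (univ : Set (ℝ × ℝ)) := by
    intro t ht
    refine ⟨?_, trivial⟩
    rw [hL]
    exact ((hd t ht).1).prodMk ((hd t ht).2)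
  have heq0 : ((h t₀, h1 t₀) : ℝ × ℝ) = g t₀ := by
    simp only [hgdef, hAdef, hBdef, Prod.mk.injEq]
    constructor
    · linear_combination (-(h t₀)) * Real.sin_sq_add_cos_sq (κ*t₀)
    · rw [hC]; linear_combination (-(κ * C)) * Real.sin_sq_add_cos_sq (κ*t₀)
  have := ODE_solution_unique_of_mem_Ioo (v := fun _ q => L q) (s := fun _ => univ)
    (K := ‖L‖₊) (fun _ _ => L.lipschitz.lipschitzOnWith) ht₀ hy
    (fun t ht => ⟨hgd t, trivial⟩) heq0
  intro θ hθ
  have := this hθ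
  exact congrArg Prod.fst this

lemma cpow_re_eq (w : ℂ) (hw : w ≠ 0) (κ : ℝ) :
    (w ^ (κ:ℂ)).re = ‖w‖ ^ κ * Real.cos (κ * w.arg) := by
  rw [Complex.cpow_def_of_ne_zero hw, Complex.exp_re]
  have h1 : (Complex.log w * (κ:ℂ)).re = Real.log (‖w‖) * κ := by
    simp [Complex.mul_re, Complex.log_re]
  have h2 : (Complex.log w * (κ:ℂ)).im = w.arg * κ := by
    simp [Complex.mul_im, Complex.log_im]
  rw [h1, h2, ← Real.rpow_def_of_pos (norm_pos_iff.mpr hw), mul_comm w.arg κ]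

lemma pow_im_eq (w : ℂ) (k : ℕ) :
    (w ^ k).im = ‖w‖ ^ k * Real.sin (k * w.arg) := by
  conv_lhs => rw [← Complex.norm_mul_exp_arg_mul_I w]
  rw [mul_pow, ← Complex.exp_nat_mul, Complex.mul_im]
  have e1 : (Complex.exp ((k:ℂ) * ((w.arg:ℂ) * Complex.I))).im = Real.sin (k * w.arg) := by
    rw [Complex.exp_im]
    simp [Complex.mul_re, Complex.mul_im]
  have e2 : (Complex.exp ((k:ℂ) * ((w.arg:ℂ) * Complex.I))).re = Real.cos (k * w.arg) := by
    rw [Complex.exp_re]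
    simp [Complex.mul_re, Complex.mul_im]
  rw [e1, e2]
  simp [← Complex.ofReal_pow]

/-- two-dimensional classification, Step 2 of the proof of Lemma 5.1:
every positively homogeneous two-dimensional solution of the mixed Dirichlet–Neumann problem
(`Δv = 0` off `{x₂ = 0}`, `∂₂⁺v + ∂₂⁻v = 0` on `{x₂ = 0, x₁ > 0}`, `v = 0` on
`{x₂ = 0, x₁ ≤ 0}`) is, up to a scalar multiple, `x₂`, `Re(x₁+i|x₂|)^{(2m+1)/2}` or
`Im(x₁+ix₂)^κ` with `κ ∈ ℕ`. -/
theorem twoD_classification (v : ℝ × ℝ → ℝ)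
    (hcont : Continuous v)
    (hsm : ContDiffOn ℝ 2 v {x : ℝ × ℝ | x.2 ≠ 0})
    (hharm : ∀ x : ℝ × ℝ, x.2 ≠ 0 → lap2 v x = 0)
    (hdUp : ∀ s : ℝ, 0 < s → DifferentiableWithinAt ℝ (fun t => v (s, t)) (Ioi 0) 0)
    (hdDown : ∀ s : ℝ, 0 < s → DifferentiableWithinAt ℝ (fun t => v (s, t)) (Iio 0) 0)
    (hneu : ∀ s : ℝ, 0 < s → nUp v s + nDown v s = 0)
    (hdir : ∀ s : ℝ, s ≤ 0 → v (s, 0) = 0)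
    (hhom : ∃ κ : ℝ, ∀ lam : ℝ, 0 < lam → ∀ x : ℝ × ℝ, v (lam • x) = lam ^ κ * v x) :
    ∃ c : ℝ,
      (∀ x : ℝ × ℝ, v x = c * x.2)
      ∨ (∃ m : ℕ, ∀ x : ℝ × ℝ, v x = c * ReP ((2*(m:ℝ)+1)/2) x)
      ∨ (∃ k : ℕ, ∀ x : ℝ × ℝ, v x = c * (((x.1 : ℂ) + (x.2 : ℝ) * Complex.I) ^ k).im) := by
  obtain ⟨κ, hκ⟩ := hhom
  have hv00 : v 0 = 0 := hdir 0 le_rfl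
  by_cases hv0 : ∀ x : ℝ × ℝ, v x = 0
  · exact ⟨0, Or.inl fun x => by rw [hv0 x, zero_mul]⟩
  push_neg at hv0
  obtain ⟨x0, hx0⟩ := hv0
  -- positivity of the homogeneity degree
  have htend0 : Filter.Tendsto (fun lam : ℝ => v (lam • x0)) (nhdsWithin 0 (Ioi 0)) (nhds 0) := by
    have h1 : Filter.Tendsto (fun lam : ℝ => lam • x0) (nhdsWithin 0 (Ioi 0)) (nhds 0) := by
      have hc : Continuous (fun lam : ℝ => lam • x0) := continuous_id.smul continuous_const
      have := (hc.tendsto 0).mono_left (nhdsWithin_le_nhds (s := Ioi (0:ℝ)))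
      simpa using this
    have := (hcont.tendsto 0).comp h1
    simpa [hv00, Function.comp_def] using this
  have hκpos : 0 < κ := by
    by_contra hle
    push_neg at hle
    apply hx0
    rcases eq_or_lt_of_le hle with h0 | hneg
    · have hconst : Filter.Tendsto (fun _ : ℝ => v x0) (nhdsWithin 0 (Ioi 0)) (nhds 0) := by
        apply htend0.congr'
        filter_upwards [self_mem_nhdsWithin] with lam hlam
        rw [hκ lam hlam x0, h0, Real.rpow_zero, one_mul]
      exact tendsto_nhds_unique tendsto_const_nhds hconst
    · have hpow : Filter.Tendsto (fun lam : ℝ => lam ^ (-κ)) (nhdsWithin 0 (Ioi 0)) (nhds 0) := by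
        have hc : ContinuousAt (fun lam : ℝ => lam ^ (-κ)) 0 :=
          Real.continuousAt_rpow_const 0 (-κ) (Or.inr (by linarith))
        have := (hc.continuousWithinAt (s := Ioi 0)).tendsto
        simpa [Real.zero_rpow (by linarith : -κ ≠ 0)] using this
      have hconst : Filter.Tendsto (fun _ : ℝ => v x0) (nhdsWithin 0 (Ioi 0)) (nhds 0) := by
        have hmul := hpow.mul htend0
        rw [mul_zero] at hmul
        apply hmul.congr'
        filter_upwards [self_mem_nhdsWithin] with lam hlam
        rw [hκ lam hlam x0, ← mul_assoc, ← Real.rpow_add hlam, neg_add_cancel,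
          Real.rpow_zero, one_mul]
      exact tendsto_nhds_unique tendsto_const_nhds hconst
  have hκne : κ ≠ 0 := ne_of_gt hκpos
  -- the circle restriction and its ODE
  set h : ℝ → ℝ := fun ψ => v (Real.cos ψ, Real.sin ψ) with hhdef
  set h1 : ℝ → ℝ := fun ψ =>
    fderiv ℝ v (Real.cos ψ, Real.sin ψ) (-Real.sin ψ, Real.cos ψ) with hh1def
  have hkey : ∀ θ : ℝ, Real.sin θ ≠ 0 →
      HasDerivAt h (h1 θ) θ ∧ HasDerivAt h1 (-κ^2 * h θ) θ :=
    fun θ hθ => circle_ode v hsm hharm κ hκ θ hθ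
  have hπ := Real.pi_pos
  have hhcont : Continuous h := hcont.comp (Real.continuous_cos.prodMk Real.continuous_sin)
  obtain ⟨A, B, hABf⟩ := ode_closed_form κ hκne h h1
    (a := 0) (b := Real.pi) (t₀ := Real.pi/2) ⟨by linarith, by linarith⟩
    (fun θ hθ => hkey θ (Real.sin_pos_of_pos_of_lt_pi hθ.1 hθ.2).ne')
  obtain ⟨A', B', hABf'⟩ := ode_closed_form κ hκne h h1
    (a := -Real.pi) (b := 0) (t₀ := -(Real.pi/2)) ⟨by linarith, by linarith⟩
    (fun θ hθ => hkey θ (Real.sin_neg_of_neg_of_neg_pi_lt hθ.2 hθ.1).ne)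
  set g₀ : ℝ → ℝ := fun θ => A * Real.cos (κ*θ) + B * Real.sin (κ*θ) with hg₀def
  set g₀' : ℝ → ℝ := fun θ => A' * Real.cos (κ*θ) + B' * Real.sin (κ*θ) with hg₀def'
  have hg₀c : Continuous g₀ := by
    rw [hg₀def]; fun_prop
  have hg₀c' : Continuous g₀' := by
    rw [hg₀def']; fun_prop
  have hIccP : Set.EqOn h g₀ (Icc 0 Real.pi) := by
    have heq : Set.EqOn h g₀ (Ioo 0 Real.pi) := fun θ hθ => hABf θ hθ
    have := heq.closure hhcont hg₀c
    rwa [closure_Ioo (ne_of_lt hπ)] at this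
  have hIccM : Set.EqOn h g₀' (Icc (-Real.pi) 0) := by
    have heq : Set.EqOn h g₀' (Ioo (-Real.pi) 0) := fun θ hθ => hABf' θ hθ
    have := heq.closure hhcont hg₀c'
    rwa [closure_Ioo (by linarith : -Real.pi ≠ 0)] at this
  -- value matching at 0
  have hA0 : h 0 = A := by
    have := hIccP ⟨le_rfl, hπ.le⟩
    simpa [hg₀def] using this
  have hA0' : h 0 = A' := by
    have := hIccM ⟨by linarith, le_rfl⟩
    simpa [hg₀def'] using this
  have hAA : A' = A := by rw [← hA0, ← hA0']
  -- derivative matching at 0 (Neumann condition)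
  have hBB : B' = B := by
    have hw : HasDerivWithinAt (fun t => v (1, t))
        (derivWithin (fun t => v (1, t)) (Ioi 0) 0) (Ioi 0) 0 :=
      (hdUp 1 one_pos).hasDerivWithinAt
    have hw' : HasDerivWithinAt (fun t => v (1, t))
        (derivWithin (fun t => v (1, t)) (Iio 0) 0) (Iio 0) 0 :=
      (hdDown 1 one_pos).hasDerivWithinAt
    have hneu1 : derivWithin (fun t => v (1, t)) (Ioi 0) 0
        = derivWithin (fun t => v (1, t)) (Iio 0) 0 := by
      have := hneu 1 one_pos
      unfold nUp nDown at this
      linarith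
    have hcosd : HasDerivAt (fun ψ : ℝ => Real.cos ψ ^ κ) 0 0 := by
      have := (Real.hasDerivAt_cos 0).rpow_const (p := κ) (Or.inl (by simp))
      simpa using this
    -- right side
    have hright : derivWithin (fun t => v (1, t)) (Ioi 0) 0 = κ * B := by
      have htan : HasDerivWithinAt Real.tan 1 (Ioo 0 (Real.pi/2)) 0 := by
        have := Real.hasDerivAt_tan (x := 0) (by simp)
        simpa using this.hasDerivWithinAt
      have hmaps : Set.MapsTo Real.tan (Ioo 0 (Real.pi/2)) (Ioi 0) := fun t ht =>
        Real.tan_pos_of_pos_of_lt_pi_div_two ht.1 ht.2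
      have hw0 : HasDerivWithinAt (fun t => v (1, t))
          (derivWithin (fun t => v (1, t)) (Ioi 0) 0) (Ioi 0) (Real.tan 0) := by
        rwa [Real.tan_zero]
      have hcomp : HasDerivWithinAt (fun ψ => v (1, Real.tan ψ))
          (derivWithin (fun t => v (1, t)) (Ioi 0) 0 * 1) (Ioo 0 (Real.pi/2)) 0 :=
        hw0.comp 0 htan hmaps
      have hmul : HasDerivWithinAt (fun ψ => Real.cos ψ ^ κ * v (1, Real.tan ψ))
          (derivWithin (fun t => v (1, t)) (Ioi 0) 0) (Ioo 0 (Real.pi/2)) 0 := by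
        have := (hcosd.hasDerivWithinAt).mul hcomp
        simpa [Pi.mul_def] using this
      have heqh : HasDerivWithinAt h (derivWithin (fun t => v (1, t)) (Ioi 0) 0)
          (Ioo 0 (Real.pi/2)) 0 := by
        apply hmul.congr
        · intro ψ hψ
          have hcpos : 0 < Real.cos ψ := Real.cos_pos_of_mem_Ioo
            ⟨by linarith [hψ.1], hψ.2⟩
          have hsc : ((Real.cos ψ) • (((1:ℝ), Real.tan ψ) : ℝ × ℝ)) =
              (Real.cos ψ, Real.sin ψ) := by
            have htan : Real.cos ψ * Real.tan ψ = Real.sin ψ := by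
              rw [Real.tan_eq_sin_div_cos]; field_simp
            simp [Prod.smul_def, smul_eq_mul, htan]
          rw [hhdef]
          simp only []
          rw [← hsc, hκ _ hcpos]
        · rw [hhdef]
          simp
      have hg₀d : HasDerivAt g₀ (κ * B) 0 := by
        have hlin : HasDerivAt (fun ψ : ℝ => κ * ψ) κ 0 := by
          simpa using (hasDerivAt_id (0:ℝ)).const_mul κ
        have hcos : HasDerivAt (fun ψ : ℝ => Real.cos (κ*ψ)) (-Real.sin (κ*0) * κ) 0 :=
          (Real.hasDerivAt_cos (κ*0)).comp 0 hlin
        have hsin : HasDerivAt (fun ψ : ℝ => Real.sin (κ*ψ)) (Real.cos (κ*0) * κ) 0 :=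
          (Real.hasDerivAt_sin (κ*0)).comp 0 hlin
        have := (hcos.const_mul A).add (hsin.const_mul B)
        rw [hg₀def]
        simp only [Pi.add_def] at this
        refine this.congr_deriv ?_
        simp
        ring
      have heqg : HasDerivWithinAt h (κ * B) (Ioo 0 (Real.pi/2)) 0 := by
        apply (hg₀d.hasDerivWithinAt).congr
        · intro ψ hψ
          exact hIccP ⟨hψ.1.le, by linarith [hψ.2]⟩
        · have : g₀ 0 = A := by simp [hg₀def]
          rw [this, hA0]
      have hud : UniqueDiffWithinAt ℝ (Ioo (0:ℝ) (Real.pi/2)) 0 := by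
        apply uniqueDiffWithinAt_convex (convex_Ioo _ _)
        · rw [interior_Ioo]
          exact nonempty_Ioo.mpr (by linarith)
        · rw [closure_Ioo (by linarith : (0:ℝ) ≠ Real.pi/2)]
          exact ⟨le_rfl, by linarith⟩
      exact (heqh.derivWithin hud).symm.trans (heqg.derivWithin hud)
    -- left side
    have hleft : derivWithin (fun t => v (1, t)) (Iio 0) 0 = κ * B' := by
      have htan : HasDerivWithinAt Real.tan 1 (Ioo (-(Real.pi/2)) 0) 0 := by
        have := Real.hasDerivAt_tan (x := 0) (by simp)
        simpa using this.hasDerivWithinAt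
      have hmaps : Set.MapsTo Real.tan (Ioo (-(Real.pi/2)) 0) (Iio 0) := fun t ht =>
        Real.tan_neg_of_neg_of_pi_div_two_lt ht.2 ht.1
      have hw0 : HasDerivWithinAt (fun t => v (1, t))
          (derivWithin (fun t => v (1, t)) (Iio 0) 0) (Iio 0) (Real.tan 0) := by
        rwa [Real.tan_zero]
      have hcomp : HasDerivWithinAt (fun ψ => v (1, Real.tan ψ))
          (derivWithin (fun t => v (1, t)) (Iio 0) 0 * 1) (Ioo (-(Real.pi/2)) 0) 0 :=
        hw0.comp 0 htan hmaps
      have hmul : HasDerivWithinAt (fun ψ => Real.cos ψ ^ κ * v (1, Real.tan ψ))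
          (derivWithin (fun t => v (1, t)) (Iio 0) 0) (Ioo (-(Real.pi/2)) 0) 0 := by
        have := (hcosd.hasDerivWithinAt).mul hcomp
        simpa [Pi.mul_def] using this
      have heqh : HasDerivWithinAt h (derivWithin (fun t => v (1, t)) (Iio 0) 0)
          (Ioo (-(Real.pi/2)) 0) 0 := by
        apply hmul.congr
        · intro ψ hψ
          have hcpos : 0 < Real.cos ψ := Real.cos_pos_of_mem_Ioo
            ⟨by linarith [hψ.1], by linarith [hψ.2]⟩
          have hsc : ((Real.cos ψ) • (((1:ℝ), Real.tan ψ) : ℝ × ℝ)) =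
              (Real.cos ψ, Real.sin ψ) := by
            have htan : Real.cos ψ * Real.tan ψ = Real.sin ψ := by
              rw [Real.tan_eq_sin_div_cos]; field_simp
            simp [Prod.smul_def, smul_eq_mul, htan]
          rw [hhdef]
          simp only []
          rw [← hsc, hκ _ hcpos]
        · rw [hhdef]
          simp
      have hg₀d : HasDerivAt g₀' (κ * B') 0 := by
        have hlin : HasDerivAt (fun ψ : ℝ => κ * ψ) κ 0 := by
          simpa using (hasDerivAt_id (0:ℝ)).const_mul κ
        have hcos : HasDerivAt (fun ψ : ℝ => Real.cos (κ*ψ)) (-Real.sin (κ*0) * κ) 0 :=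
          (Real.hasDerivAt_cos (κ*0)).comp 0 hlin
        have hsin : HasDerivAt (fun ψ : ℝ => Real.sin (κ*ψ)) (Real.cos (κ*0) * κ) 0 :=
          (Real.hasDerivAt_sin (κ*0)).comp 0 hlin
        have := (hcos.const_mul A').add (hsin.const_mul B')
        rw [hg₀def']
        simp only [Pi.add_def] at this
        refine this.congr_deriv ?_
        simp
        ring
      have heqg : HasDerivWithinAt h (κ * B') (Ioo (-(Real.pi/2)) 0) 0 := by
        apply (hg₀d.hasDerivWithinAt).congr
        · intro ψ hψ
          exact hIccM ⟨by linarith [hψ.1], hψ.2.le⟩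
        · have : g₀' 0 = A' := by simp [hg₀def']
          rw [this, hA0']
      have hud : UniqueDiffWithinAt ℝ (Ioo (-(Real.pi/2)) (0:ℝ)) 0 := by
        apply uniqueDiffWithinAt_convex (convex_Ioo _ _)
        · rw [interior_Ioo]
          exact nonempty_Ioo.mpr (by linarith)
        · rw [closure_Ioo (by linarith : -(Real.pi/2) ≠ (0:ℝ))]
          exact ⟨by linarith, le_rfl⟩
      exact (heqh.derivWithin hud).symm.trans (heqg.derivWithin hud)
    have : κ * B = κ * B' := by rw [← hright, ← hleft, hneu1]
    exact (mul_left_cancel₀ hκne this).symm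
  -- Dirichlet boundary values at ±π
  have hπ0 : h Real.pi = 0 := by
    rw [hhdef]
    simp only [Real.cos_pi, Real.sin_pi]
    exact hdir (-1) (by norm_num)
  have hmπ0 : h (-Real.pi) = 0 := by
    rw [hhdef]
    simp only [Real.cos_neg, Real.sin_neg, Real.cos_pi, Real.sin_pi, neg_zero]
    exact hdir (-1) (by norm_num)
  have hend1 : A * Real.cos (κ*Real.pi) + B * Real.sin (κ*Real.pi) = 0 := by
    have := hIccP ⟨hπ.le, le_rfl⟩
    rw [hπ0, hg₀def] at this
    simpa using this.symm
  have hend2 : A * Real.cos (κ*Real.pi) - B * Real.sin (κ*Real.pi) = 0 := by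
    have := hIccM ⟨le_rfl, by linarith⟩
    rw [hmπ0, hg₀def', hAA, hBB] at this
    have h2 := this.symm
    simp only [mul_neg, Real.cos_neg, Real.sin_neg] at h2
    linarith
  have hAcos : A * Real.cos (κ*Real.pi) = 0 := by linarith
  have hBsin : B * Real.sin (κ*Real.pi) = 0 := by linarith
  -- global formula on the circle
  have hAll : ∀ θ ∈ Icc (-Real.pi) Real.pi,
      h θ = A * Real.cos (κ*θ) + B * Real.sin (κ*θ) := by
    intro θ hθ
    rcases le_total 0 θ with hle | hle
    · have := hIccP ⟨hle, hθ.2⟩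
      rwa [hg₀def] at this
    · have := hIccM ⟨hθ.1, hle⟩
      rwa [hg₀def', hAA, hBB] at this
  -- polar representation
  have hpolar : ∀ x : ℝ × ℝ, x ≠ 0 →
      v x = ‖(x.1:ℂ) + (x.2:ℝ) * Complex.I‖ ^ κ
        * h (((x.1:ℂ) + (x.2:ℝ) * Complex.I).arg) := by
    intro x hx
    set z : ℂ := (x.1:ℂ) + (x.2:ℝ) * Complex.I with hzdef
    have hzre : z.re = x.1 := by simp [hzdef]
    have hzim : z.im = x.2 := by simp [hzdef]
    have hz : z ≠ 0 := by
      intro h0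
      apply hx
      rw [h0] at hzre hzim
      simp at hzre hzim
      exact Prod.ext_iff.mpr ⟨hzre.symm, hzim.symm⟩
    have hr : 0 < ‖z‖ := norm_pos_iff.mpr hz
    have hxeq : ((‖z‖) • ((Real.cos z.arg, Real.sin z.arg) : ℝ × ℝ)) = x := by
      rw [Complex.cos_arg hz, Complex.sin_arg, hzre, hzim]
      have hrne : ‖z‖ ≠ 0 := hr.ne'
      have e1 : ‖z‖ * (x.1 / ‖z‖) = x.1 := by field_simp
      have e2 : ‖z‖ * (x.2 / ‖z‖) = x.2 := by field_simp
      simp only [Prod.smul_def, smul_eq_mul, e1, e2]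
    rw [← hxeq, hκ _ hr]
  -- case analysis
  by_cases hA : A = 0
  · by_cases hB : B = 0
    · -- v ≡ 0
      refine ⟨0, Or.inl fun x => ?_⟩
      rw [zero_mul]
      rcases eq_or_ne x 0 with rfl | hx
      · exact hv00
      · rw [hpolar x hx]
        have harg := hAll (((x.1:ℂ) + (x.2:ℝ) * Complex.I).arg)
          ⟨(Complex.neg_pi_lt_arg _).le, Complex.arg_le_pi _⟩
        rw [harg, hA, hB]
        ring
    · -- Im case
      have hsin0 : Real.sin (κ*Real.pi) = 0 := by
        rcases mul_eq_zero.mp hBsin with h | h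
        · exact absurd h hB
        · exact h
      obtain ⟨n, hn⟩ := Real.sin_eq_zero_iff.mp hsin0
      have hκn : κ = (n:ℝ) := by
        have := Real.pi_ne_zero
        exact (mul_right_cancel₀ this hn).symm
      have hn1 : 1 ≤ n := by
        by_contra hc
        push_neg at hc
        have hn' : n ≤ 0 := by omega
        have : (n:ℝ) ≤ 0 := by exact_mod_cast hn'
        rw [hκn] at hκpos
        linarith
      set k : ℕ := n.toNat with hkdef
      have hk' : (n.toNat : ℤ) = n := Int.toNat_of_nonneg (by linarith)
      have hkκ : (k:ℝ) = κ := by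
        rw [hκn, hkdef]
        exact_mod_cast congrArg (fun z : ℤ => (z:ℝ)) hk'
      have hk0 : k ≠ 0 := by
        intro h0
        rw [h0] at hkκ
        simp at hkκ
        exact hκne hkκ.symm
      refine ⟨B, Or.inr (Or.inr ⟨k, fun x => ?_⟩)⟩
      rcases eq_or_ne x 0 with rfl | hx
      · rw [hv00]
        have : ((0:ℝ×ℝ).1 : ℂ) + ((0:ℝ×ℝ).2 : ℝ) * Complex.I = 0 := by simp
        rw [this, zero_pow hk0]
        simp
      · rw [hpolar x hx, pow_im_eq]
        set z : ℂ := (x.1:ℂ) + (x.2:ℝ) * Complex.I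
        have harg := hAll z.arg ⟨(Complex.neg_pi_lt_arg _).le, Complex.arg_le_pi _⟩
        rw [harg, hA, ← hkκ, Real.rpow_natCast]
        ring
  · -- Re case
    have hcos0 : Real.cos (κ*Real.pi) = 0 := by
      rcases mul_eq_zero.mp hAcos with h | h
      · exact absurd h hA
      · exact h
    have hsinne : Real.sin (κ*Real.pi) ≠ 0 := by
      intro hs
      have := Real.sin_sq_add_cos_sq (κ*Real.pi)
      rw [hs, hcos0] at this
      norm_num at this
    have hB : B = 0 := by
      rcases mul_eq_zero.mp hBsin with h | h
      · exact h
      · exact absurd h hsinne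
    obtain ⟨n, hn⟩ := Real.cos_eq_zero_iff.mp hcos0
    have hκn : κ = (2*(n:ℝ)+1)/2 := by
      have hpne := Real.pi_ne_zero
      have : κ * Real.pi = ((2*(n:ℝ)+1)/2) * Real.pi := by rw [hn]; ring
      exact mul_right_cancel₀ hpne this
    have hn0 : 0 ≤ n := by
      by_contra hc
      push_neg at hc
      have hn' : n ≤ -1 := by omega
      have : (n:ℝ) ≤ -1 := by exact_mod_cast hn'
      rw [hκn] at hκpos
      linarith
    set m : ℕ := n.toNat with hmdef
    have hm' : (n.toNat : ℤ) = n := Int.toNat_of_nonneg hn0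
    have hmn : ((n.toNat : ℕ) : ℝ) = (n : ℝ) := by exact_mod_cast congrArg (fun z : ℤ => (z:ℝ)) hm'
    have hmκ : (2*(m:ℝ)+1)/2 = κ := by
      rw [hκn, hmdef, hmn]
    refine ⟨A, Or.inr (Or.inl ⟨m, fun x => ?_⟩)⟩
    rw [hmκ]
    rcases eq_or_ne x 0 with rfl | hx
    · rw [hv00]
      unfold ReP
      have : (((0:ℝ×ℝ).1:ℂ) + (|(0:ℝ×ℝ).2| : ℝ) * Complex.I) = 0 := by simp
      rw [this, Complex.zero_cpow (by exact_mod_cast hκne)]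
      simp
    · set z : ℂ := (x.1:ℂ) + (x.2:ℝ) * Complex.I with hzdef
      set z' : ℂ := (x.1:ℂ) + (|x.2| : ℝ) * Complex.I with hzdef'
      have hzre : z.re = x.1 := by simp [hzdef]
      have hzim : z.im = x.2 := by simp [hzdef]
      have hz : z ≠ 0 := by
        intro h0
        apply hx
        rw [h0] at hzre hzim
        simp at hzre hzim
        exact Prod.ext_iff.mpr ⟨hzre.symm, hzim.symm⟩
      have habs : ‖z'‖ = ‖z‖ ∧
          Real.cos (κ * z'.arg) = Real.cos (κ * z.arg) := by
        rcases le_or_gt 0 x.2 with hx2 | hx2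
        · have : z' = z := by rw [hzdef', hzdef, abs_of_nonneg hx2]
          rw [this]
          exact ⟨rfl, rfl⟩
        · have hconj : z' = (starRingEnd ℂ) z := by
            rw [hzdef', hzdef, abs_of_neg hx2]
            simp [Complex.ext_iff]
          have hargne : z.arg ≠ Real.pi := by
            intro hp
            have hs := Complex.sin_arg z
            rw [hp, Real.sin_pi, hzim] at hs
            have habsne : ‖z‖ ≠ 0 := (norm_pos_iff.mpr hz).ne'
            have : x.2 = 0 := (div_eq_zero_iff.mp hs.symm).resolve_right habsne
            linarith
          constructor
          · rw [hconj, Complex.norm_conj]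
          · rw [hconj, Complex.arg_conj]
            simp only [hargne, if_false]
            rw [mul_neg, Real.cos_neg]
      have hz' : z' ≠ 0 := by
        intro h0
        have := congrArg (‖·‖) h0
        rw [habs.1] at this
        simp at this
        exact hz this
      unfold ReP
      rw [show (((x.1:ℂ)) + (|x.2| : ℝ) * Complex.I) = z' from rfl]
      rw [cpow_re_eq z' hz' κ, habs.1, habs.2]
      rw [hpolar x hx]
      have harg := hAll z.arg ⟨(Complex.neg_pi_lt_arg _).le, Complex.arg_le_pi _⟩
      rw [show ((x.1:ℂ) + (x.2:ℝ) * Complex.I) = z from rfl] at *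
      rw [harg, hB]
      ring
end

section
/- For each unit vector $\nu_\theta=e_i\sin\theta+e_n\cos\theta$ ($1\leq i\leq n-1$) define $p^{\nu_\theta}(x)=\mathrm{Re}((x'\cdot\nu_\theta)+i|x_{n+1}|)^{3/2}$. Then $\lim_{\theta\to 0}\frac{p^{\nu_\theta}(x)-p^{e_n}(x)}{\theta}=\frac{3}{2}x_i\,\mathrm{Re}(x_n+i|x_{n+1}|)^{1/2}$, uniformly on $\overline{B_1}$. -/
open Metric Topology

private lemma sqrtC_mul_self {z : ℂ} : z ^ ((1:ℂ)/2) * z ^ ((1:ℂ)/2) = z := by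
  rcases eq_or_ne z 0 with h | h
  · rw [h, Complex.zero_cpow (by norm_num : (1:ℂ)/2 ≠ 0), mul_zero]
  · rw [← Complex.cpow_add _ _ h]
    norm_num

private lemma cpow_three_half {z : ℂ} : z ^ ((3:ℂ)/2) = z * z ^ ((1:ℂ)/2) := by
  rcases eq_or_ne z 0 with h | h
  · rw [h, Complex.zero_cpow (by norm_num : (3:ℂ)/2 ≠ 0), zero_mul]
  · rw [show (3:ℂ)/2 = 1 + 1/2 by norm_num, Complex.cpow_add _ _ h, Complex.cpow_one]

private lemma sqrtC_re_nonneg {z : ℂ} (hz : 0 ≤ z.im) : 0 ≤ (z ^ ((1:ℂ)/2)).re := by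
  rcases eq_or_ne z 0 with h | h
  · simp [h, Complex.zero_cpow (by norm_num : (1:ℂ)/2 ≠ 0)]
  · rw [Complex.cpow_def_of_ne_zero h, Complex.exp_re]
    apply mul_nonneg (Real.exp_nonneg _)
    apply Real.cos_nonneg_of_mem_Icc
    constructor
    · simp only [Complex.mul_im, Complex.log_im, Complex.log_re]
      have h1 : (0:ℝ) ≤ Complex.arg z := Complex.arg_nonneg_iff.2 hz
      have : ((1:ℂ)/2).re = 1/2 := by norm_num
      have : ((1:ℂ)/2).im = 0 := by norm_num
      simp only [this, ‹((1:ℂ)/2).re = 1/2›, mul_zero, add_zero]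
      nlinarith [Real.pi_pos]
    · simp only [Complex.mul_im, Complex.log_im, Complex.log_re]
      have h1 : Complex.arg z ≤ Real.pi := Complex.arg_le_pi z
      have h2 : ((1:ℂ)/2).re = 1/2 := by norm_num
      have h3 : ((1:ℂ)/2).im = 0 := by norm_num
      simp only [h2, h3, mul_zero, add_zero]
      linarith

private lemma sqrtC_im_nonneg {z : ℂ} (hz : 0 ≤ z.im) : 0 ≤ (z ^ ((1:ℂ)/2)).im := by
  rcases eq_or_ne z 0 with h | h
  · simp [h, Complex.zero_cpow (by norm_num : (1:ℂ)/2 ≠ 0)]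
  · rw [Complex.cpow_def_of_ne_zero h, Complex.exp_im]
    apply mul_nonneg (Real.exp_nonneg _)
    apply Real.sin_nonneg_of_nonneg_of_le_pi
    · simp only [Complex.mul_im, Complex.log_im, Complex.log_re]
      have h1 : (0:ℝ) ≤ Complex.arg z := Complex.arg_nonneg_iff.2 hz
      have h2 : ((1:ℂ)/2).re = 1/2 := by norm_num
      have h3 : ((1:ℂ)/2).im = 0 := by norm_num
      simp only [h2, h3, mul_zero, add_zero]
      linarith
    · simp only [Complex.mul_im, Complex.log_im, Complex.log_re]
      have h1 : Complex.arg z ≤ Real.pi := Complex.arg_le_pi z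
      have h2 : ((1:ℂ)/2).re = 1/2 := by norm_num
      have h3 : ((1:ℂ)/2).im = 0 := by norm_num
      simp only [h2, h3, mul_zero, add_zero]
      linarith [Real.pi_pos]

/-- key algebraic estimate: Taylor remainder for `z^{3/2}` on the closed upper half plane. -/
private lemma key_est {z w : ℂ} (hz : 0 ≤ z.im) (hw : 0 ≤ w.im) :
    ‖z ^ ((3:ℂ)/2) - w ^ ((3:ℂ)/2) - (3/2) * w ^ ((1:ℂ)/2) * (z - w)‖
      ≤ (3/2) * Real.sqrt (‖z - w‖) * ‖z - w‖ := by
  set u := z ^ ((1:ℂ)/2) with hu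
  set v := w ^ ((1:ℂ)/2) with hv
  have huu : u * u = z := sqrtC_mul_self
  have hvv : v * v = w := sqrtC_mul_self
  have hA : z ^ ((3:ℂ)/2) - w ^ ((3:ℂ)/2) - (3/2) * w ^ ((1:ℂ)/2) * (z - w)
      = (1/2) * ((u - v) * (u - v) * (2*u + v)) := by
    rw [cpow_three_half, cpow_three_half, ← hu, ← hv, ← huu, ← hvv]; ring
  have hur := sqrtC_re_nonneg hz
  have hui := sqrtC_im_nonneg hz
  have hvr := sqrtC_re_nonneg hw
  have hvi := sqrtC_im_nonneg hw
  rw [← hu] at hur hui; rw [← hv] at hvr hvi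
  set D := ‖z - w‖ with hD
  have hzw : (u - v) * (u + v) = z - w := by rw [← huu, ← hvv]; ring
  have hprod : ‖u - v‖ * ‖u + v‖ = D := by
    rw [← norm_mul, hzw]
  have hle1 : ‖u - v‖ ≤ ‖u + v‖ := by
    have := Complex.sq_norm (u - v)
    have := Complex.sq_norm (u + v)
    nlinarith [Complex.normSq_apply (u - v), Complex.normSq_apply (u + v),
      norm_nonneg (u - v), norm_nonneg (u + v),
      mul_nonneg hur hvr, mul_nonneg hui hvi, Complex.sub_re u v, Complex.sub_im u v,
      Complex.add_re u v, Complex.add_im u v]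
  have hle2 : ‖u‖ ≤ ‖u + v‖ := by
    nlinarith [Complex.sq_norm u, Complex.sq_norm (u + v), Complex.normSq_apply u,
      Complex.normSq_apply (u + v), norm_nonneg u, norm_nonneg (u + v),
      mul_nonneg hur hvr, mul_nonneg hui hvi, sq_nonneg v.re, sq_nonneg v.im,
      Complex.add_re u v, Complex.add_im u v]
  have hle3 : ‖v‖ ≤ ‖u + v‖ := by
    nlinarith [Complex.sq_norm v, Complex.sq_norm (u + v), Complex.normSq_apply v,
      Complex.normSq_apply (u + v), norm_nonneg v, norm_nonneg (u + v),
      mul_nonneg hur hvr, mul_nonneg hui hvi, sq_nonneg u.re, sq_nonneg u.im,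
      Complex.add_re u v, Complex.add_im u v]
  have hDnn : 0 ≤ D := norm_nonneg _
  have e1 : ‖u - v‖ ≤ Real.sqrt D := by
    rw [show D = Real.sqrt D * Real.sqrt D from (Real.mul_self_sqrt hDnn).symm] at hprod
    nlinarith [norm_nonneg (u - v), norm_nonneg (u + v),
      Real.sqrt_nonneg D, hle1]
  have e2 : ‖2*u + v‖ ≤ 3 * ‖u + v‖ := by
    calc ‖2*u + v‖ ≤ ‖2*u‖ + ‖v‖ := norm_add_le _ _
    _ = 2 * ‖u‖ + ‖v‖ := by rw [norm_mul]; norm_num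
    _ ≤ 3 * ‖u + v‖ := by linarith
  rw [hA]
  rw [norm_mul, norm_mul, norm_mul]
  have h12 : ‖(1:ℂ)/2‖ = 1/2 := by norm_num
  rw [h12]
  nlinarith [norm_nonneg (u - v), norm_nonneg (u + v),
    norm_nonneg (2*u + v), Real.sqrt_nonneg D, e1, e2, hprod,
    mul_le_mul_of_nonneg_left e2 (mul_nonneg (norm_nonneg (u-v)) (norm_nonneg (u-v)))]

private lemma coord_le_norm {m : ℕ} (x : EuclideanSpace ℝ (Fin m)) (j : Fin m) :
    |x j| ≤ ‖x‖ := by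
  have h : Real.sqrt (‖x j‖ ^ 2) = |x j| := by
    rw [Real.norm_eq_abs, Real.sqrt_sq_eq_abs, _root_.abs_abs]
  rw [EuclideanSpace.norm_eq, ← h]
  exact Real.sqrt_le_sqrt (Finset.single_le_sum (f := fun k => ‖x k‖ ^ 2) (fun k _ => sq_nonneg _) (Finset.mem_univ j))

set_option maxHeartbeats 1000000 in
private lemma pointwise_est {a b c θ : ℝ} (hθ : θ ≠ 0) (hθ1 : |θ| ≤ 1)
    (ha : |a| ≤ 1) (hb : |b| ≤ 1) (hc0 : 0 ≤ c) (hc : c ≤ 1) :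
    |(((((a * Real.sin θ + b * Real.cos θ : ℝ) : ℂ) + (c:ℂ) * Complex.I) ^ ((3:ℂ)/2)).re
        - (((b:ℂ) + (c:ℂ) * Complex.I) ^ ((3:ℂ)/2)).re) / θ
      - (3/2 : ℝ) * a * (((b:ℂ) + (c:ℂ) * Complex.I) ^ ((1:ℂ)/2)).re|
      ≤ 3 * Real.sqrt (2 * |θ|) + 6 * |θ| := by
  set z : ℂ := ((a * Real.sin θ + b * Real.cos θ : ℝ) : ℂ) + (c:ℂ) * Complex.I with hz
  set w : ℂ := (b:ℂ) + (c:ℂ) * Complex.I with hw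
  have hθpos : 0 < |θ| := abs_pos.2 hθ
  have hzim : z.im = c := by simp [hz]
  have hwim : w.im = c := by simp [hw]
  have hzw : z - w = ((a * Real.sin θ + b * (Real.cos θ - 1) : ℝ) : ℂ) := by
    rw [hz, hw]; push_cast; ring
  set A : ℂ := z ^ ((3:ℂ)/2) - w ^ ((3:ℂ)/2) - (3/2) * w ^ ((1:ℂ)/2) * (z - w) with hA
  set B : ℂ := (3/2) * w ^ ((1:ℂ)/2) * ((z - w) - ((a * θ : ℝ) : ℂ)) with hB
  -- trig bounds
  have hs : |Real.sin θ| ≤ |θ| := Real.abs_sin_le_abs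
  have hcos : |Real.cos θ - 1| ≤ θ ^ 2 / 2 := by
    have h1 : 1 - θ ^ 2 / 2 ≤ Real.cos θ := Real.one_sub_sq_div_two_le_cos
    have h2 : Real.cos θ ≤ 1 := Real.cos_le_one θ
    rw [abs_le]; constructor <;> nlinarith [sq_nonneg θ]
  have hsq : θ ^ 2 ≤ |θ| := by nlinarith [_root_.sq_abs θ, hθpos]
  have hsinθ : |Real.sin θ - θ| ≤ θ ^ 2 / 2 := by
    have h1 := Real.sin_bound hθ1
    have h2 : |Real.sin θ - θ| ≤ |Real.sin θ - (θ - θ ^ 3 / 6)| + |θ ^ 3 / 6| := by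
      have : Real.sin θ - θ = (Real.sin θ - (θ - θ ^ 3 / 6)) + (-(θ ^ 3 / 6)) := by ring
      rw [this]
      exact (abs_add_le _ _).trans (by rw [abs_neg])
    have h3 : |θ ^ 3 / 6| = |θ| ^ 3 / 6 := by rw [abs_div, _root_.abs_pow]; norm_num
    have h4 : |θ| ^ 3 ≤ θ ^ 2 := by nlinarith [_root_.sq_abs θ, abs_nonneg θ]
    have h5 : |θ| ^ 4 ≤ θ ^ 2 := by nlinarith [_root_.sq_abs θ, abs_nonneg θ, sq_nonneg θ]
    nlinarith
  -- bound on D = |z - w|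
  have hD : ‖z - w‖ ≤ 2 * |θ| := by
    rw [hzw, Complex.norm_real, Real.norm_eq_abs]
    calc |a * Real.sin θ + b * (Real.cos θ - 1)|
        ≤ |a * Real.sin θ| + |b * (Real.cos θ - 1)| := abs_add_le _ _
      _ = |a| * |Real.sin θ| + |b| * |Real.cos θ - 1| := by rw [abs_mul, abs_mul]
      _ ≤ 2 * |θ| := by
          nlinarith [mul_le_mul ha hs (abs_nonneg _) zero_le_one,
            mul_le_mul hb hcos (abs_nonneg _) zero_le_one]
  -- bound on |A|
  have hAbd : ‖A‖ ≤ 3 * Real.sqrt (2 * |θ|) * |θ| := by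
    have hk := key_est (z := z) (w := w) (by rw [hzim]; exact hc0) (by rw [hwim]; exact hc0)
    have hsqle : Real.sqrt (‖z - w‖) ≤ Real.sqrt (2 * |θ|) := Real.sqrt_le_sqrt hD
    have hDnn : (0:ℝ) ≤ ‖z - w‖ := norm_nonneg _
    nlinarith [Real.sqrt_nonneg (‖z - w‖), Real.sqrt_nonneg (2 * |θ|)]
  -- bound on |w^{1/2}|
  have hvbd : ‖w ^ ((1:ℂ)/2)‖ ≤ 2 := by
    have h1 : ‖w ^ ((1:ℂ)/2)‖ * ‖w ^ ((1:ℂ)/2)‖ = ‖w‖ := by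
      rw [← norm_mul, sqrtC_mul_self]
    have h2 : ‖w‖ ≤ 2 := by
      calc ‖w‖ ≤ ‖(b:ℂ)‖ + ‖(c:ℂ) * Complex.I‖ :=
            norm_add_le _ _
        _ = |b| + c := by
            rw [norm_mul, Complex.norm_real, Real.norm_eq_abs, Complex.norm_real, Real.norm_eq_abs, Complex.norm_I,
              mul_one, _root_.abs_of_nonneg hc0]
        _ ≤ 2 := by linarith
    nlinarith [norm_nonneg (w ^ ((1:ℂ)/2))]
  -- bound on |B|
  have hE : (z - w) - ((a * θ : ℝ) : ℂ) = ((a * (Real.sin θ - θ) + b * (Real.cos θ - 1) : ℝ) : ℂ) := by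
    rw [hzw]; push_cast; ring
  have hBbd : ‖B‖ ≤ 6 * θ ^ 2 := by
    rw [hB, norm_mul, norm_mul, hE, Complex.norm_real, Real.norm_eq_abs]
    have h32 : ‖(3:ℂ)/2‖ = 3/2 := by
      rw [norm_div]; norm_num
    rw [h32]
    have hEbd : |a * (Real.sin θ - θ) + b * (Real.cos θ - 1)| ≤ 2 * θ ^ 2 := by
      calc |a * (Real.sin θ - θ) + b * (Real.cos θ - 1)|
          ≤ |a| * |Real.sin θ - θ| + |b| * |Real.cos θ - 1| := by
            refine (abs_add_le _ _).trans ?_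
            rw [abs_mul, abs_mul]
        _ ≤ 2 * θ ^ 2 := by
            nlinarith [mul_le_mul ha hsinθ (abs_nonneg _) zero_le_one,
              mul_le_mul hb hcos (abs_nonneg _) zero_le_one]
    nlinarith [norm_nonneg (w ^ ((1:ℂ)/2)),
      abs_nonneg (a * (Real.sin θ - θ) + b * (Real.cos θ - 1)), sq_nonneg θ]
  -- combine
  have hQ : ((z ^ ((3:ℂ)/2)).re - (w ^ ((3:ℂ)/2)).re) / θ
      - (3/2 : ℝ) * a * (w ^ ((1:ℂ)/2)).re = (A + B).re / θ := by
    have hAB : A + B = z ^ ((3:ℂ)/2) - w ^ ((3:ℂ)/2)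
        - ((3/2 * a * θ : ℝ) : ℂ) * w ^ ((1:ℂ)/2) := by
      rw [hA, hB]; push_cast; ring
    rw [hAB]
    simp only [Complex.sub_re, Complex.re_ofReal_mul]
    field_simp
  rw [hQ, abs_div]
  rw [div_le_iff₀ hθpos]
  calc |(A + B).re| ≤ ‖A + B‖ := Complex.abs_re_le_norm _
    _ ≤ ‖A‖ + ‖B‖ := norm_add_le _ _
    _ ≤ 3 * Real.sqrt (2 * |θ|) * |θ| + 6 * θ ^ 2 := by linarith
    _ ≤ (3 * Real.sqrt (2 * |θ|) + 6 * |θ|) * |θ| := by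
        nlinarith [_root_.sq_abs θ]


/-- `p^{ν_θ}(x) = Re((x'·ν_θ) + i|x_{n+1}|)^{3/2}` for the rotated direction
`ν_θ = e_i sin θ + e_n cos θ`, on `ℝ^{(n+1)+1}` with `x_{n+1}` the last coordinate and
`x_n` the coordinate of index `n`. -/
noncomputable def pRot (n : ℕ) (i : Fin (n+2)) (θ : ℝ)
    (x : EuclideanSpace ℝ (Fin (n+2))) : ℝ :=
  ((((x i * Real.sin θ + x ⟨n, by omega⟩ * Real.cos θ : ℝ) : ℂ)
      + ((|x (Fin.last (n+1))| : ℝ) : ℂ) * Complex.I) ^ ((3:ℂ)/2)).re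

/-- Step 2b of Lemma 3.10: for a tangential index `i` (`i < n`),
`(p^{ν_θ} - p^{e_n})/θ → (3/2) x_i Re(x_n + i|x_{n+1}|)^{1/2}` as `θ → 0`,
uniformly on the closed unit ball. -/
theorem rotation_derivative_of_profile (n : ℕ) (i : Fin (n+2)) (hi : (i : ℕ) < n) :
    TendstoUniformlyOn
      (fun θ : ℝ => fun x : EuclideanSpace ℝ (Fin (n+2)) =>
        (pRot n i θ x - pRot n i 0 x) / θ)
      (fun x : EuclideanSpace ℝ (Fin (n+2)) =>
        (3/2 : ℝ) * x i *
          ((((x ⟨n, by omega⟩ : ℝ) : ℂ)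
            + ((|x (Fin.last (n+1))| : ℝ) : ℂ) * Complex.I) ^ ((1:ℂ)/2)).re)
      (𝓝[≠] (0:ℝ))
      (closedBall (0 : EuclideanSpace ℝ (Fin (n+2))) 1) := by
  rw [Metric.tendstoUniformlyOn_iff]
  intro ε hε
  have hbound : Filter.Tendsto (fun θ : ℝ => 3 * Real.sqrt (2 * |θ|) + 6 * |θ|)
      (𝓝 (0:ℝ)) (𝓝 0) := by
    have hcont : Continuous fun θ : ℝ => 3 * Real.sqrt (2 * |θ|) + 6 * |θ| := by
      continuity
    have h0 : 3 * Real.sqrt (2 * |(0:ℝ)|) + 6 * |(0:ℝ)| = 0 := by simp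
    simpa [h0] using hcont.tendsto 0
  have h1 : ∀ᶠ θ : ℝ in 𝓝[≠] (0:ℝ), 3 * Real.sqrt (2 * |θ|) + 6 * |θ| < ε :=
    (hbound.mono_left nhdsWithin_le_nhds).eventually_lt_const hε
  have h2 : ∀ᶠ θ : ℝ in 𝓝[≠] (0:ℝ), |θ| ≤ 1 := by
    apply Filter.Eventually.filter_mono nhdsWithin_le_nhds
    filter_upwards [Metric.closedBall_mem_nhds (0:ℝ) one_pos] with θ hθ
    simpa [Real.dist_eq] using hθ
  have h3 : ∀ᶠ θ : ℝ in 𝓝[≠] (0:ℝ), θ ≠ 0 := eventually_mem_nhdsWithin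
  filter_upwards [h1, h2, h3] with θ hlt hθ1 hθ0
  intro x hx
  have hx' : ‖x‖ ≤ 1 := by simpa using mem_closedBall_zero_iff.mp hx
  have ha : |x i| ≤ 1 := (coord_le_norm x i).trans hx'
  have hb : |x ⟨n, by omega⟩| ≤ 1 := (coord_le_norm x _).trans hx'
  have hcc : |x (Fin.last (n+1))| ≤ 1 := (coord_le_norm x _).trans hx'
  have key := pointwise_est (a := x i) (b := x ⟨n, by omega⟩) (c := |x (Fin.last (n+1))|)
    hθ0 hθ1 ha hb (abs_nonneg _) hcc
  rw [Real.dist_eq, abs_sub_comm]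
  refine lt_of_le_of_lt ?_ hlt
  have hp0 : pRot n i 0 x
      = (((((x ⟨n, by omega⟩ : ℝ)) : ℂ)
          + ((|x (Fin.last (n+1))| : ℝ) : ℂ) * Complex.I) ^ ((3:ℂ)/2)).re := by
    simp [pRot]
  rw [show pRot n i θ x
      = (((((x i * Real.sin θ + x ⟨n, by omega⟩ * Real.cos θ : ℝ)) : ℂ)
          + ((|x (Fin.last (n+1))| : ℝ) : ℂ) * Complex.I) ^ ((3:ℂ)/2)).re from rfl, hp0]
  exact key
end
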